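/- Let m be a measure of granularity of sets on U. Then for every partition π of U into nonempty blocks, EG_m(Π_0) ≤ EG_m(π) ≤ EG_m(Π_1); in particular the expected granularity attains its minimum at the finest partition Π_0 and its maximum at the coarsest partition Π_1. -/

import Mathlib

/-- A measure of granularity of sets on `U`: nonnegative, strictly monotone with
respect to strict inclusion, and invariant under cardinality. -/
def IsGranularityMeasure {U : Type*} [Fintype U] (m : Set U → ℝ) : Prop :=
  (∀ X : Set U, 0 ≤ m X) ∧
  (∀ X Y : Set U, X ⊂ Y → m X < m Y) ∧
  (∀ X Y : Set U, X.ncard = Y.ncard → m X = m Y)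

/-- `π` (a finite family of subsets of `U`) is a partition of `U` into nonempty blocks. -/
def IsPartition {U : Type*} (π : Finset (Set U)) : Prop :=
  (∀ X ∈ π, X.Nonempty) ∧
  (∀ X ∈ π, ∀ Y ∈ π, X ≠ Y → Disjoint X Y) ∧
  (⋃ X ∈ π, X) = Set.univ

/-- Expected granularity `EG_m(π) = Σ_{X ∈ π} m(X)·(|X|/|U|)`. -/
noncomputable def EG {U : Type*} [Fintype U] (m : Set U → ℝ) (π : Finset (Set U)) : ℝ :=
  ∑ X ∈ π, m X * ((X.ncard : ℝ) / (Fintype.card U : ℝ))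

/-- The finest partition `Π_0 = {{x} : x ∈ U}` of `U`. -/
noncomputable def finestPartition (U : Type*) [Fintype U] : Finset (Set U) :=
  haveI := Classical.decEq (Set U)
  Finset.univ.image (fun x : U => ({x} : Set U))

theorem EG_between_finest_and_coarsest {U : Type*} [Fintype U] [Nonempty U]
    (m : Set U → ℝ) (hm : IsGranularityMeasure m)
    (π : Finset (Set U)) (hπ : IsPartition π) :
    EG m (finestPartition U) ≤ EG m π ∧
      EG m π ≤ EG m ({Set.univ} : Finset (Set U)) := by

  classical
  obtain ⟨hnn, hmono, hinv⟩ := hm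
  obtain ⟨hne, hdisj, hcover⟩ := hπ
  have hn0 : 0 < (Fintype.card U : ℝ) := by exact_mod_cast Fintype.card_pos
  -- sum of block cardinalities equals card U
  have hbU : (π.biUnion fun X => (Set.toFinite X).toFinset) = Finset.univ := by
    ext x
    simp only [Finset.mem_biUnion, Set.Finite.mem_toFinset, Finset.mem_univ, iff_true]
    have hx : x ∈ (⋃ X ∈ π, X) := by rw [hcover]; trivial
    simpa using hx
  have hsum : ∑ X ∈ π, X.ncard = Fintype.card U := by
    have hd : ∀ X ∈ π, ∀ Y ∈ π, X ≠ Y →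
        Disjoint ((Set.toFinite X).toFinset) ((Set.toFinite Y).toFinset) := by
      intro X hX Y hY hXY
      rw [Set.Finite.disjoint_toFinset]
      exact hdisj X hX Y hY hXY
    have := Finset.card_biUnion hd
    rw [hbU, Finset.card_univ] at this
    rw [this]
    exact Finset.sum_congr rfl fun X _ => Set.ncard_eq_toFinset_card X (Set.toFinite X)
  have hsumR : ∑ X ∈ π, (X.ncard : ℝ) = (Fintype.card U : ℝ) := by exact_mod_cast hsum
  obtain ⟨x₀⟩ := ‹Nonempty U›
  set m1 : ℝ := m {x₀} with hm1
  -- lower bound on each block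
  have hlow : ∀ X ∈ π, m1 ≤ m X := by
    intro X hX
    obtain ⟨x, hx⟩ := hne X hX
    have hx1 : m ({x} : Set U) = m1 := hinv _ _ (by simp)
    have hsub : ({x} : Set U) ⊆ X := Set.singleton_subset_iff.mpr hx
    rcases eq_or_ssubset_of_subset hsub with h | h
    · rw [← h, hx1]
    · exact le_of_lt (hx1 ▸ hmono _ _ h)
  have hhigh : ∀ X ∈ π, m X ≤ m Set.univ := by
    intro X hX
    rcases eq_or_ssubset_of_subset (Set.subset_univ X) with h | h
    · rw [h]
    · exact le_of_lt (hmono _ _ h)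
  -- EG of the finest partition is m1
  have hfin : EG m (finestPartition U) = m1 := by
    rw [EG, finestPartition,
      Finset.sum_image (fun a _ b _ hab => by simpa using hab)]
    have : ∀ x : U, m ({x} : Set U) * ((({x} : Set U).ncard : ℝ) / (Fintype.card U : ℝ))
        = m1 * (1 / (Fintype.card U : ℝ)) := by
      intro x
      rw [hinv ({x} : Set U) {x₀} (by simp)]
      simp [hm1]
    rw [Finset.sum_congr rfl fun x _ => this x, Finset.sum_const, Finset.card_univ,
      nsmul_eq_mul]
    field_simp
  -- EG of the coarsest partition is m univ
  have hcoar : EG m ({Set.univ} : Finset (Set U)) = m Set.univ := by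
    rw [EG, Finset.sum_singleton, Set.ncard_univ, Nat.card_eq_fintype_card]
    field_simp
  constructor
  · rw [hfin]
    calc m1 = m1 * ((∑ X ∈ π, (X.ncard : ℝ)) / (Fintype.card U : ℝ)) := by
              rw [hsumR]; field_simp
    _ = ∑ X ∈ π, m1 * ((X.ncard : ℝ) / (Fintype.card U : ℝ)) := by
              rw [Finset.sum_div, Finset.mul_sum]
    _ ≤ EG m π := by
              apply Finset.sum_le_sum
              intro X hX
              exact mul_le_mul_of_nonneg_right (hlow X hX)
                (div_nonneg (by positivity) (le_of_lt hn0))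
  · rw [hcoar]
    calc EG m π ≤ ∑ X ∈ π, m Set.univ * ((X.ncard : ℝ) / (Fintype.card U : ℝ)) := by
              apply Finset.sum_le_sum
              intro X hX
              exact mul_le_mul_of_nonneg_right (hhigh X hX)
                (div_nonneg (by positivity) (le_of_lt hn0))
    _ = m Set.univ * ((∑ X ∈ π, (X.ncard : ℝ)) / (Fintype.card U : ℝ)) := by
              rw [Finset.sum_div, Finset.mul_sum]
    _ = m Set.univ := by rw [hsumR]; field_simp
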